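/- Let θ be a real number with cos θ ≠ 0. Then the family n ↦ π/((π/2 − θ − 2πn)(π/2 + θ + 2πn)), indexed by n ∈ ℤ, is summable (all denominators are nonzero), and Σ_{n∈ℤ} π/((π/2 − θ − 2πn)(π/2 + θ + 2πn)) = 1/cos θ. -/

import Mathlib

open Filter Finset Topology intervalIntegral

/-- Lower bound for a linear function of an integer, valid cofinitely. -/
lemma aux_linear_lower (p q : ℝ) (hq : q ≠ 0) :
    ∀ᶠ n : ℤ in Filter.cofinite, |q| / 2 * |(n : ℝ)| ≤ |p + q * n| := by
  have hq' : 0 < |q| := abs_pos.mpr hq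
  have key : ∀ x : ℝ, 2 * |p| / |q| ≤ |x| → |q| / 2 * |x| ≤ |p + q * x| := by
    intro x hx
    have h1 : |p| ≤ |q| * |x| / 2 := by
      rw [div_le_iff₀ hq'] at hx; nlinarith [abs_nonneg x]
    have h2 : |q * x| - |p| ≤ |p + q * x| := by
      have h := abs_sub_abs_le_abs_sub (q * x) (-p)
      simp only [abs_neg, sub_neg_eq_add] at h
      rw [add_comm (q * x) p] at h
      linarith
    rw [abs_mul] at h2
    linarith
  rw [Int.cofinite_eq, Filter.eventually_sup]
  constructor
  · filter_upwards [Filter.eventually_le_atBot (-(⌈2 * |p| / |q|⌉ + 1))] with n hn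
    apply key
    have : (n : ℝ) ≤ -(⌈2 * |p| / |q|⌉ + 1 : ℤ) := by exact_mod_cast hn
    have h2 := Int.le_ceil (2 * |p| / |q|)
    push_cast at this
    have := neg_abs_le (n : ℝ)
    have := neg_le_abs (n : ℝ)
    push_cast at *
    linarith [neg_le_abs (n:ℝ)]
  · filter_upwards [Filter.eventually_ge_atTop (⌈2 * |p| / |q|⌉ + 1)] with n hn
    apply key
    have : ((⌈2 * |p| / |q|⌉ + 1 : ℤ) : ℝ) ≤ n := by exact_mod_cast hn
    have h2 := Int.le_ceil (2 * |p| / |q|)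
    push_cast at this
    linarith [le_abs_self (n:ℝ)]

/-- Summability of `1/((p+qn)(r+sn))` over `n : ℤ`. -/
lemma summable_aux (p q r s : ℝ) (hq : q ≠ 0) (hs : s ≠ 0) :
    Summable (fun n : ℤ => 1 / ((p + q * n) * (r + s * n))) := by
  have h2 : Summable (fun n : ℤ => 1 / (n : ℝ) ^ 2) :=
    Real.summable_one_div_int_pow.mpr one_lt_two
  refine summable_of_isBigO h2 ?_
  rw [Asymptotics.isBigO_iff]
  refine ⟨4 / (|q| * |s|), ?_⟩
  filter_upwards [aux_linear_lower p q hq, aux_linear_lower r s hs,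
    Filter.eventually_cofinite_ne 0] with n h1 h2 h3
  have hq' : 0 < |q| := abs_pos.mpr hq
  have hs' : 0 < |s| := abs_pos.mpr hs
  have hn : 0 < |(n : ℝ)| := by
    simp only [abs_pos, ne_eq, Int.cast_eq_zero]; exact h3
  have e1 : 0 < |q| / 2 * |(n : ℝ)| := by positivity
  have e2 : 0 < |s| / 2 * |(n : ℝ)| := by positivity
  have hprod : (|q| / 2 * |(n : ℝ)|) * (|s| / 2 * |(n : ℝ)|) ≤ |p + q * n| * |r + s * n| :=
    mul_le_mul h1 h2 (le_of_lt e2) (abs_nonneg _)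
  have : ‖(1 : ℝ) / ((p + q * n) * (r + s * n))‖ = 1 / (|p + q * n| * |r + s * n|) := by
    rw [Real.norm_eq_abs, abs_div, abs_one, abs_mul]
  rw [this]
  have hb : 1 / (|p + q * n| * |r + s * n|) ≤ 1 / ((|q| / 2 * |(n : ℝ)|) * (|s| / 2 * |(n : ℝ)|)) :=
    one_div_le_one_div_of_le (by positivity) hprod
  refine hb.trans (le_of_eq ?_)
  rw [Real.norm_eq_abs, abs_of_nonneg (by positivity : (0:ℝ) ≤ 1 / (n:ℝ)^2)]
  field_simp
  rw [← sq_abs (n : ℝ)]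
  ring

lemma neg_one_zpow_abs (m : ℤ) : |(-1 : ℝ) ^ m| = 1 := by
  rcases Int.even_or_odd m with ⟨k, hk⟩ | ⟨k, hk⟩ <;> subst hk
  · rw [show k + k = 2 * k by ring, zpow_mul]; norm_num
  · rw [zpow_add₀ (by norm_num : (-1 : ℝ) ≠ 0), zpow_mul]; norm_num

/-- Integral of a complex exponential over `[-π, π]`. -/
lemma int_exp (w : ℝ) (hw : w ≠ 0) :
    ∫ x in (-Real.pi)..Real.pi, Complex.exp ((w : ℂ) * Complex.I * x) =
      2 * Real.sin (w * Real.pi) / w := by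
  have hc : (w : ℂ) * Complex.I ≠ 0 :=
    mul_ne_zero (Complex.ofReal_ne_zero.mpr hw) Complex.I_ne_zero
  rw [integral_exp_mul_complex hc]
  rw [show ((w : ℂ) * Complex.I * (Real.pi : ℝ)) = ((w * Real.pi : ℝ) : ℂ) * Complex.I by
        push_cast; ring,
      show ((w : ℂ) * Complex.I * ((-Real.pi : ℝ) : ℂ)) = (-(w * Real.pi : ℝ) : ℂ) * Complex.I by
        push_cast; ring]
  rw [Complex.exp_mul_I, Complex.exp_mul_I, Complex.cos_neg, Complex.sin_neg,
    ← Complex.ofReal_sin, ← Complex.ofReal_cos]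
  have hw' : (w : ℂ) ≠ 0 := Complex.ofReal_ne_zero.mpr hw
  field_simp
  ring

/-- Reflection of a sum over a symmetric integer interval. -/
lemma sum_reflect (g : ℤ → ℝ) (N : ℕ) :
    ∑ n ∈ Finset.Icc (-(N : ℤ)) N, g (-n) = ∑ n ∈ Finset.Icc (-(N : ℤ)) N, g n := by
  refine Finset.sum_nbij' (fun n => -n) (fun n => -n) ?_ ?_ ?_ ?_ ?_ <;>
    intros <;> simp_all only [Finset.mem_Icc] <;> omega

/-- Pairing up a sum over `Icc (-(2N+1)) (2N)`. -/
lemma sum_pairs (g : ℤ → ℝ) (N : ℕ) :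
    ∑ n ∈ Finset.Icc (-(N : ℤ)) N, (g (2 * n - 1) + g (2 * n)) =
      ∑ m ∈ Finset.Icc (-(2 * (N : ℤ) + 1)) (2 * N), g m := by
  have hbi : Finset.Icc (-(2 * (N : ℤ) + 1)) (2 * N) =
      (Finset.Icc (-(N : ℤ)) N).biUnion (fun n => {2 * n - 1, 2 * n}) := by
    ext m
    simp only [Finset.mem_Icc, Finset.mem_biUnion, Finset.mem_insert, Finset.mem_singleton]
    constructor
    · intro hm
      exact ⟨(m + 1) / 2, by omega, by omega⟩
    · rintro ⟨n, hn, rfl | rfl⟩ <;> omega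
  rw [hbi, Finset.sum_biUnion]
  · refine (Finset.sum_congr rfl fun n _ => ?_).symm
    rw [Finset.sum_pair (by omega : 2 * n - 1 ≠ 2 * n)]
  · intro a _ b _ hab
    simp only [Function.onFun]
    rw [Finset.disjoint_left]
    intro m hm hm'
    simp only [Finset.mem_insert, Finset.mem_singleton] at hm hm'
    omega

/-- The Fourier-series input: secant-type expansion raw form. -/
lemma hasSum_sec_aux (z : ℝ) (hz : ∀ n : ℤ, z + n ≠ 0) :
    HasSum (fun n : ℤ => Real.sin (Real.pi * z) / (2 * Real.pi) *
      ((-1 : ℝ) ^ n / (z - n) + (-1 : ℝ) ^ n / (z + n))) 1 := by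
  have hπ := Real.pi_pos
  have hz' : ∀ n : ℤ, z - n ≠ 0 := by
    intro n hn
    exact hz (-n) (by push_cast; linarith)
  haveI : Fact (0 < 2 * Real.pi) := ⟨by positivity⟩
  set f : ℝ → ℂ := fun x => Complex.cos (z * x) with hf
  have hends : f (-Real.pi) = f (-Real.pi + 2 * Real.pi) := by
    simp only [hf]
    rw [show -Real.pi + 2 * Real.pi = Real.pi by ring]
    rw [show ((-Real.pi : ℝ) : ℂ) = -(Real.pi : ℂ) by push_cast; ring]
    rw [show (z : ℂ) * -(Real.pi : ℂ) = -((z : ℂ) * Real.pi) by ring, Complex.cos_neg]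
  have hcont : Continuous (AddCircle.liftIco (2 * Real.pi) (-Real.pi) f) :=
    AddCircle.liftIco_continuous hends
      ((Complex.continuous_cos.comp (continuous_const.mul Complex.continuous_ofReal)).continuousOn)
  set F : C(AddCircle (2 * Real.pi), ℂ) := ⟨_, hcont⟩ with hF
  -- Fourier coefficients
  have hFc : ∀ n : ℤ, fourierCoeff (⇑F) n =
      ((Real.sin (Real.pi * z) / (2 * Real.pi) *
        ((-1 : ℝ) ^ n / (z - n) + (-1 : ℝ) ^ n / (z + n)) : ℝ) : ℂ) := by
    intro n
    have h1 : fourierCoeff (⇑F) n = fourierCoeffOn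
        (lt_add_of_pos_right (-Real.pi) (by positivity : (0:ℝ) < 2 * Real.pi)) f n :=
      fourierCoeff_liftIco_eq f n
    rw [h1, fourierCoeffOn_eq_integral]
    simp_rw [fourier_coe_apply, smul_eq_mul]
    rw [show -Real.pi + 2 * Real.pi = Real.pi by ring]
    rw [show Real.pi - -Real.pi = 2 * Real.pi by ring]
    have hid : ∀ x : ℝ, Complex.exp (2 * (Real.pi : ℂ) * Complex.I * ((-n : ℤ) : ℂ) * (x : ℂ) /
          ((2 * Real.pi : ℝ) : ℂ)) * Complex.cos ((z : ℂ) * x) =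
        (Complex.exp (((z - n : ℝ) : ℂ) * Complex.I * x) +
          Complex.exp (((-(z + n) : ℝ) : ℂ) * Complex.I * x)) / 2 := by
      intro x
      have h2 : Complex.exp (2 * (Real.pi : ℂ) * Complex.I * ((-n : ℤ) : ℂ) * (x : ℂ) /
          ((2 * Real.pi : ℝ) : ℂ)) = Complex.exp (((-n : ℝ) : ℂ) * Complex.I * x) := by
        have hπc : (Real.pi : ℂ) ≠ 0 := Complex.ofReal_ne_zero.mpr (ne_of_gt hπ)
        congr 1
        push_cast
        field_simp
      rw [h2]
      have h3 : Complex.cos ((z : ℂ) * x) =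
          (Complex.exp ((z : ℂ) * x * Complex.I) + Complex.exp (-((z : ℂ) * x) * Complex.I)) / 2 := by
        have := Complex.two_cos ((z : ℂ) * x)
        linear_combination this / 2
      rw [h3, ← mul_div_assoc, mul_add, ← Complex.exp_add, ← Complex.exp_add,
        show ((-n : ℝ) : ℂ) * Complex.I * x + (z : ℂ) * x * Complex.I
            = ((z - n : ℝ) : ℂ) * Complex.I * x by push_cast; ring,
        show ((-n : ℝ) : ℂ) * Complex.I * x + -((z : ℂ) * x) * Complex.I
            = ((-(z + n) : ℝ) : ℂ) * Complex.I * x by push_cast; ring]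
    simp only [hf]
    simp_rw [hid]
    have i1 : IntervalIntegrable (fun x : ℝ => Complex.exp (((z - n : ℝ) : ℂ) * Complex.I * x))
        MeasureTheory.volume (-Real.pi) Real.pi := Continuous.intervalIntegrable
          (Complex.continuous_exp.comp (continuous_const.mul Complex.continuous_ofReal)) _ _
    have i2 : IntervalIntegrable (fun x : ℝ => Complex.exp (((-(z + n) : ℝ) : ℂ) * Complex.I * x))
        MeasureTheory.volume (-Real.pi) Real.pi := Continuous.intervalIntegrable
          (Complex.continuous_exp.comp (continuous_const.mul Complex.continuous_ofReal)) _ _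
    rw [intervalIntegral.integral_div, intervalIntegral.integral_add i1 i2]
    rw [int_exp (z - n) (hz' n), int_exp (-(z + n)) (neg_ne_zero.mpr (hz n))]
    have hs1 : Real.sin ((z - n) * Real.pi) = (-1 : ℝ) ^ n * Real.sin (Real.pi * z) := by
      rw [show (z - n) * Real.pi = z * Real.pi - n * Real.pi by ring,
        Real.sin_sub_int_mul_pi, mul_comm Real.pi z]
    have hs2 : Real.sin (-(z + n) * Real.pi) = -((-1 : ℝ) ^ n * Real.sin (Real.pi * z)) := by
      rw [show -(z + n) * Real.pi = -(z * Real.pi + n * Real.pi) by ring, Real.sin_neg,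
        Real.sin_add_int_mul_pi, mul_comm Real.pi z]
    rw [hs1, hs2]
    have hπ' : (Real.pi : ℝ) ≠ 0 := ne_of_gt hπ
    have hreal : (1 / (2 * Real.pi)) * ((2 * ((-1 : ℝ) ^ n * Real.sin (Real.pi * z)) / (z - n) +
        2 * (-((-1 : ℝ) ^ n * Real.sin (Real.pi * z))) / (-(z + n))) / 2) =
        Real.sin (Real.pi * z) / (2 * Real.pi) *
          ((-1 : ℝ) ^ n / (z - n) + (-1 : ℝ) ^ n / (z + n)) := by
      have e1 := hz' n
      have e2 := hz n
      rw [show (2 : ℝ) * (-((-1 : ℝ) ^ n * Real.sin (Real.pi * z))) =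
          -(2 * ((-1 : ℝ) ^ n * Real.sin (Real.pi * z))) by ring, neg_div_neg_eq]
      field_simp
    rw [← hreal, Complex.real_smul]
    push_cast
    ring
  -- summability of the coefficients
  have hc0 : Summable (fun n : ℤ => 1 / ((z - n) * (z + n))) :=
    (summable_aux z (-1) z 1 (by norm_num) one_ne_zero).congr fun n => by ring_nf
  have hsum : Summable (fun n : ℤ => fourierCoeff (⇑F) n) := by
    apply Summable.of_norm
    have h1 : Summable (fun n : ℤ =>
        |Real.sin (Real.pi * z) / (2 * Real.pi) * (2 * z)| *
          |1 / ((z - n) * (z + n))|) := (hc0.abs).mul_left _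
    refine h1.congr fun n => ?_
    rw [hFc n, Complex.norm_real, Real.norm_eq_abs]
    have e1 := hz' n
    have e2 := hz n
    have hkey : Real.sin (Real.pi * z) / (2 * Real.pi) *
        ((-1 : ℝ) ^ n / (z - n) + (-1 : ℝ) ^ n / (z + n)) =
        (Real.sin (Real.pi * z) / (2 * Real.pi) * (2 * z)) *
          ((-1 : ℝ) ^ n * (1 / ((z - n) * (z + n)))) := by
      field_simp
      ring
    rw [hkey, abs_mul (Real.sin (Real.pi * z) / (2 * Real.pi) * (2 * z)),
      abs_mul ((-1 : ℝ) ^ n), neg_one_zpow_abs, one_mul]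
  -- evaluate the Fourier series at 0
  have hpt := has_pointwise_sum_fourier_series_of_summable hsum (0 : AddCircle (2 * Real.pi))
  simp_rw [fourier_eval_zero, smul_eq_mul, mul_one] at hpt
  have hF0 : F (0 : AddCircle (2 * Real.pi)) = 1 := by
    show AddCircle.liftIco (2 * Real.pi) (-Real.pi) f (((0 : ℝ) : AddCircle (2 * Real.pi))) = 1
    rw [AddCircle.liftIco_coe_apply (by constructor <;> simp <;> linarith)]
    simp [hf]
  rw [hF0] at hpt
  rw [show (1 : ℂ) = ((1 : ℝ) : ℂ) by norm_num] at hpt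
  simp_rw [hFc] at hpt
  exact Complex.hasSum_ofReal.mp hpt

theorem stmt_12 (θ : ℝ) (h : Real.cos θ ≠ 0) :
    (∀ n : ℤ, Real.pi / 2 - θ - 2 * Real.pi * n ≠ 0 ∧
      Real.pi / 2 + θ + 2 * Real.pi * n ≠ 0) ∧
    Summable (fun n : ℤ =>
      Real.pi / ((Real.pi / 2 - θ - 2 * Real.pi * n) * (Real.pi / 2 + θ + 2 * Real.pi * n))) ∧
    ∑' n : ℤ, Real.pi /
        ((Real.pi / 2 - θ - 2 * Real.pi * n) * (Real.pi / 2 + θ + 2 * Real.pi * n)) =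
      1 / Real.cos θ := by
  have hπ := Real.pi_pos
  have hπ' : Real.pi ≠ 0 := ne_of_gt hπ
  obtain ⟨z, rfl⟩ : ∃ z : ℝ, θ = Real.pi * z - Real.pi / 2 :=
    ⟨θ / Real.pi + 1 / 2, by field_simp; ring⟩
  have hz : ∀ n : ℤ, z + n ≠ 0 := by
    intro n hn
    apply h
    rw [Real.cos_eq_zero_iff]
    refine ⟨-n - 1, ?_⟩
    have hzn : z = -n := by linarith
    rw [hzn]; push_cast; ring
  -- the two denominators
  have hd1 : ∀ n : ℤ, Real.pi / 2 - (Real.pi * z - Real.pi / 2) - 2 * Real.pi * n =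
      -(Real.pi * (z + (2 * n - 1 : ℤ))) := by intro n; push_cast; ring
  have hd2 : ∀ n : ℤ, Real.pi / 2 + (Real.pi * z - Real.pi / 2) + 2 * Real.pi * n =
      Real.pi * (z + (2 * n : ℤ)) := by intro n; push_cast; ring
  have hne1 : ∀ n : ℤ, Real.pi / 2 - (Real.pi * z - Real.pi / 2) - 2 * Real.pi * n ≠ 0 := by
    intro n; rw [hd1 n]
    exact neg_ne_zero.mpr (mul_ne_zero hπ' (hz _))
  have hne2 : ∀ n : ℤ, Real.pi / 2 + (Real.pi * z - Real.pi / 2) + 2 * Real.pi * n ≠ 0 := by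
    intro n; rw [hd2 n]
    exact mul_ne_zero hπ' (hz _)
  -- zpow parity facts
  have hpow2 : ∀ n : ℤ, ((-1 : ℝ)) ^ (2 * n) = 1 := by
    intro n; rw [zpow_mul]; norm_num
  have hpow21 : ∀ n : ℤ, ((-1 : ℝ)) ^ (2 * n - 1) = -1 := by
    intro n
    rw [zpow_sub₀ (by norm_num : (-1 : ℝ) ≠ 0), hpow2 n]; norm_num
  have hneg : ∀ m : ℤ, ((-1 : ℝ)) ^ (-m) = ((-1 : ℝ)) ^ m := by
    intro m
    rw [zpow_neg, ← inv_zpow]; norm_num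
  set g : ℤ → ℝ := fun m => (-1 : ℝ) ^ m / (z + m) with hg
  set t : ℤ → ℝ := fun n => Real.pi /
      ((Real.pi / 2 - (Real.pi * z - Real.pi / 2) - 2 * Real.pi * n) *
       (Real.pi / 2 + (Real.pi * z - Real.pi / 2) + 2 * Real.pi * n)) with htdef
  -- per-term identity for t
  have ht : ∀ n : ℤ, t n = (1 / Real.pi) * (g (2 * n - 1) + g (2 * n)) := by
    intro n
    have e1 := hz (2 * n - 1)
    have e2 := hz (2 * n)
    simp only [htdef, hg, hd1 n, hd2 n, hpow21 n, hpow2 n]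
    push_cast at e1 e2 ⊢
    field_simp
    ring
  -- summability of t
  have hsummable : Summable t := by
    have h0 := (summable_aux (Real.pi / 2 - (Real.pi * z - Real.pi / 2)) (-(2 * Real.pi))
      (Real.pi / 2 + (Real.pi * z - Real.pi / 2)) (2 * Real.pi)
      (neg_ne_zero.mpr (by positivity : (0:ℝ) < 2 * Real.pi).ne')
      ((by positivity : (0:ℝ) < 2 * Real.pi).ne')).mul_left Real.pi
    refine h0.congr fun n => ?_
    simp only [htdef]
    rw [mul_one_div]
    congr 1
    ring
  -- the Fourier input
  have HS := hasSum_sec_aux z hz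
  have hfe : (fun n : ℤ => Real.sin (Real.pi * z) / (2 * Real.pi) *
      ((-1 : ℝ) ^ n / (z - n) + (-1 : ℝ) ^ n / (z + n))) =
      (fun n : ℤ => Real.sin (Real.pi * z) / (2 * Real.pi) * (g (-n) + g n)) := by
    funext n
    simp only [hg, hneg n]
    push_cast
    ring_nf
  rw [hfe] at HS
  have hσ : Real.sin (Real.pi * z) ≠ 0 := by
    intro h0
    have HS' := HS
    rw [h0] at HS'
    simp only [zero_div, zero_mul] at HS'
    exact one_ne_zero (hasSum_zero.unique HS').symm
  -- partial sums over symmetric intervals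
  have htF : Tendsto (fun N : ℕ => Finset.Icc (-(N : ℤ)) N) atTop atTop := by
    apply Filter.tendsto_atTop_finset_of_monotone
    · intro a b hab
      apply Finset.Icc_subset_Icc
      · simp only [neg_le_neg_iff]
        exact_mod_cast hab
      · exact_mod_cast hab
    · intro x
      exact ⟨x.natAbs, by simp only [Finset.mem_Icc, id_eq]; omega⟩
  have hP : Tendsto (fun N : ℕ => ∑ m ∈ Finset.Icc (-(N : ℤ)) N, g m) atTop
      (𝓝 (Real.pi / Real.sin (Real.pi * z))) := by
    have h1 : Tendsto (fun N : ℕ => ∑ n ∈ Finset.Icc (-(N : ℤ)) N,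
        (Real.sin (Real.pi * z) / (2 * Real.pi) * (g (-n) + g n))) atTop (𝓝 1) := HS.comp htF
    have key : ∀ N : ℕ, ∑ n ∈ Finset.Icc (-(N : ℤ)) N,
        (Real.sin (Real.pi * z) / (2 * Real.pi) * (g (-n) + g n)) =
        Real.sin (Real.pi * z) / (2 * Real.pi) *
          (2 * ∑ m ∈ Finset.Icc (-(N : ℤ)) N, g m) := by
      intro N
      rw [← Finset.mul_sum]
      congr 1
      rw [Finset.sum_add_distrib, two_mul, sum_reflect]
    simp_rw [key] at h1
    have h2 := h1.const_mul (Real.pi / Real.sin (Real.pi * z))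
    rw [mul_one] at h2
    refine h2.congr fun N => ?_
    field_simp
  -- the limit of the partial sums of t
  have h2N : Tendsto (fun N : ℕ => 2 * N) atTop atTop :=
    Filter.tendsto_atTop_mono (fun n => by simp only [id_eq]; omega) tendsto_id
  have hP2 : Tendsto (fun N : ℕ => ∑ m ∈ Finset.Icc (-(2 * (N : ℤ))) (2 * (N : ℤ)), g m) atTop
      (𝓝 (Real.pi / Real.sin (Real.pi * z))) := by
    refine (hP.comp h2N).congr fun N => ?_
    simp only [Function.comp_apply]
    norm_cast
  have hg0 : Tendsto (fun N : ℕ => g (-(2 * (N : ℤ) + 1))) atTop (𝓝 0) := by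
    have h1 : Tendsto (fun N : ℕ => (2 * (N : ℝ) + 1) - z) atTop atTop := by
      simp only [sub_eq_add_neg]
      apply Filter.tendsto_atTop_add_const_right
      apply Filter.tendsto_atTop_add_const_right
      exact (tendsto_natCast_atTop_atTop).const_mul_atTop two_pos
    have h2 := h1.inv_tendsto_atTop
    refine h2.congr fun N => ?_
    simp only [Pi.inv_apply, hg]
    have e1 := hz (-(2 * (N : ℤ) + 1))
    have hp : ((-1 : ℝ)) ^ (-(2 * (N : ℤ) + 1)) = -1 := by
      rw [hneg, zpow_add₀ (by norm_num : (-1:ℝ) ≠ 0), hpow2]; norm_num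
    rw [hp]
    push_cast at e1 ⊢
    rw [inv_eq_one_div, div_eq_div_iff (by intro hh; apply e1; linarith) e1]
    ring
  have hlim : Tendsto (fun N : ℕ => ∑ n ∈ Finset.Icc (-(N : ℤ)) N, t n) atTop
      (𝓝 (1 / Real.sin (Real.pi * z))) := by
    have hchain : ∀ N : ℕ, ∑ n ∈ Finset.Icc (-(N : ℤ)) N, t n =
        (1 / Real.pi) * (g (-(2 * (N : ℤ) + 1)) +
          ∑ m ∈ Finset.Icc (-(2 * (N : ℤ))) (2 * (N : ℤ)), g m) := by
      intro N
      have c1 : ∑ n ∈ Finset.Icc (-(N : ℤ)) N, t n =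
          (1 / Real.pi) * ∑ n ∈ Finset.Icc (-(N : ℤ)) N, (g (2 * n - 1) + g (2 * n)) := by
        rw [Finset.mul_sum]
        exact Finset.sum_congr rfl fun n _ => ht n
      rw [c1, sum_pairs]
      congr 1
      rw [show Finset.Icc (-(2 * (N : ℤ) + 1)) (2 * N) =
        insert (-(2 * (N : ℤ) + 1)) (Finset.Icc (-(2 * (N : ℤ))) (2 * (N : ℤ))) by
          ext m; simp only [Finset.mem_Icc, Finset.mem_insert]; omega]
      rw [Finset.sum_insert (by simp only [Finset.mem_Icc]; omega)]
    have hcomb := (hg0.add hP2).const_mul (1 / Real.pi)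
    rw [zero_add] at hcomb
    have hval : (1 / Real.pi) * (Real.pi / Real.sin (Real.pi * z)) =
        1 / Real.sin (Real.pi * z) := by field_simp
    rw [hval] at hcomb
    exact hcomb.congr fun N => (hchain N).symm
  have hts : Tendsto (fun N : ℕ => ∑ n ∈ Finset.Icc (-(N : ℤ)) N, t n) atTop
      (𝓝 (∑' n, t n)) := hsummable.hasSum.comp htF
  have hfinal : (∑' n, t n) = 1 / Real.sin (Real.pi * z) := tendsto_nhds_unique hts hlim
  have hcos : Real.sin (Real.pi * z) = Real.cos (Real.pi * z - Real.pi / 2) := by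
    rw [← Real.sin_add_pi_div_two]
    ring_nf
  refine ⟨fun n => ⟨hne1 n, hne2 n⟩, hsummable, ?_⟩
  rw [hfinal, hcos]
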